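/- arXiv:1905.00113 — 2 statements merged into one kernel-verified Lean document; each statement's English description precedes it below -/
import Mathlib

section
/- Let Φ be a frame and Ψ a Bessel sequence with ‖T_Φ − T_Ψ‖ ≤ μ < √m_Φ/2. Then the map Γ sending the approximately dual Φ_Θ^{ad}(A) of Φ to the approximately dual Ψ_{Θ_ba}^{ad}(A) of Ψ, with Θ_ba = P_{ker T_Ψ} U_{Φ_Θ^{ad}(A)}, is a bijection between the set of approximately dual frames of Φ and the set of approximately dual frames of Ψ. -/
open ContinuousLinearMap MeasureTheory
open scoped InnerProductSpace ComplexConjugate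

noncomputable section

notation "ℓ²" => lp (fun _ : ℕ => ℂ) 2

variable {H : Type} [NormedAddCommGroup H] [InnerProductSpace ℂ H] [CompleteSpace H]

/-- `Φ = (φₙ)` is a frame for `H` with lower bound `m` and upper bound `M`. -/
def IsFrame (φ : ℕ → H) (m M : ℝ) : Prop :=
  0 < m ∧ 0 < M ∧ ∀ f : H,
    m * ‖f‖ ^ 2 ≤ ∑' n, ‖(inner ℂ (φ n) f : ℂ)‖ ^ 2 ∧
    ∑' n, ‖(inner ℂ (φ n) f : ℂ)‖ ^ 2 ≤ M * ‖f‖ ^ 2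

/-- `Φ = (φₙ)` is a Bessel sequence with bound `M`. -/
def IsBessel (φ : ℕ → H) (M : ℝ) : Prop :=
  0 < M ∧ ∀ f : H, ∑' n, ‖(inner ℂ (φ n) f : ℂ)‖ ^ 2 ≤ M * ‖f‖ ^ 2

/-- `U` is the analysis operator of the sequence `Φ = (φₙ)`, i.e. `U f = (⟨f, φₙ⟩)ₙ`. -/
def IsAnalysis (φ : ℕ → H) (U : H →L[ℂ] ℓ²) : Prop :=
  ∀ (f : H) (n : ℕ), U f n = (inner ℂ (φ n) f : ℂ)

/-- Orthogonal projection onto a closed submodule, as an endomorphism. -/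
def orthProj {E : Type} [NormedAddCommGroup E] [InnerProductSpace ℂ E] [CompleteSpace E]
    (K : Submodule ℂ E) (hK : IsClosed (K : Set E)) : E →L[ℂ] E :=
  haveI := hK.completeSpace_coe
  K.subtypeL.comp (K.orthogonalProjectionOnto)

/-- Orthogonal projection onto a closed submodule, with values in the submodule. -/
def orthProjTo {E : Type} [NormedAddCommGroup E] [InnerProductSpace ℂ E] [CompleteSpace E]
    (K : Submodule ℂ E) (hK : IsClosed (K : Set E)) : E →L[ℂ] K :=
  haveI := hK.completeSpace_coe
  K.orthogonalProjectionOnto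

/-- The gap `δ(X, Y) = ‖(Id - P_Y)|_X‖` from `X` to a closed subspace `Y`. -/
def gap {E : Type} [NormedAddCommGroup E] [InnerProductSpace ℂ E] [CompleteSpace E]
    (X Y : Submodule ℂ E) (hY : IsClosed (Y : Set E)) : ℝ :=
  ‖(ContinuousLinearMap.id ℂ E - orthProj Y hY).comp X.subtypeL‖

lemma kerAdjEq (U : H →L[ℂ] ℓ²) :
    LinearMap.ker (adjoint U : ℓ² →ₗ[ℂ] H) = (LinearMap.range (U : H →ₗ[ℂ] ℓ²))ᗮ := by
  ext x
  simp only [LinearMap.mem_ker, Submodule.mem_orthogonal, ContinuousLinearMap.coe_coe]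
  constructor
  · rintro h u ⟨g, rfl⟩
    rw [ContinuousLinearMap.coe_coe, ← adjoint_inner_right, h, inner_zero_right]
  · intro h
    refine ext_inner_left ℂ fun g => ?_
    rw [adjoint_inner_right, inner_zero_right]
    exact h (U g) ⟨g, rfl⟩

lemma l2norm_sq (f : ℓ²) : ‖f‖ ^ 2 = ∑' n, ‖f n‖ ^ 2 := by
  have h := lp.norm_rpow_eq_tsum (p := 2) (by norm_num) f
  have h2 : ((2 : ENNReal).toReal) = (2 : ℝ) := by norm_num
  rw [h2] at h
  calc ‖f‖ ^ 2 = ‖f‖ ^ (2 : ℝ) := by rw [← Real.rpow_natCast]; norm_num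
    _ = ∑' n, ‖f n‖ ^ (2 : ℝ) := h
    _ = ∑' n, ‖f n‖ ^ 2 := by
        refine tsum_congr fun n => ?_
        rw [← Real.rpow_natCast]; norm_num

lemma gapEst (U : H →L[ℂ] ℓ²) (θ : ℓ²) (κ : ℝ) (hκ : 0 ≤ κ)
    (hb : ∀ g : H, ‖(inner ℂ (U g) θ : ℂ)‖ ≤ κ * (‖U g‖ * ‖θ‖)) :
    ‖θ - orthProj (LinearMap.ker (adjoint U : ℓ² →ₗ[ℂ] H))
      (ContinuousLinearMap.isClosed_ker (adjoint U)) θ‖ ≤ κ * ‖θ‖ := by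
  set Y := LinearMap.ker (adjoint U : ℓ² →ₗ[ℂ] H) with hY
  haveI := (ContinuousLinearMap.isClosed_ker (adjoint U)).completeSpace_coe
  set z := θ - orthProj Y (ContinuousLinearMap.isClosed_ker (adjoint U)) θ with hzdef
  have hz : z ∈ Yᗮ := Submodule.sub_starProjection_mem_orthogonal θ
  have hzc : z ∈ closure ((LinearMap.range (U : H →ₗ[ℂ] ℓ²) : Submodule ℂ ℓ²) : Set ℓ²) := by
    have : Yᗮ = (LinearMap.range (U : H →ₗ[ℂ] ℓ²)).topologicalClosure := by
      rw [hY, kerAdjEq, Submodule.orthogonal_orthogonal_eq_closure]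
    rw [this] at hz
    rw [← Submodule.topologicalClosure_coe]; exact hz
  have key : ‖(inner ℂ z θ : ℂ)‖ ≤ κ * (‖z‖ * ‖θ‖) := by
    have hcl : IsClosed {w : ℓ² | ‖(inner ℂ w θ : ℂ)‖ ≤ κ * (‖w‖ * ‖θ‖)} := by
      apply isClosed_le
      · exact (Continuous.inner continuous_id continuous_const).norm
      · exact (continuous_const.mul ((continuous_norm).mul continuous_const))
    have hsub : ((LinearMap.range (U : H →ₗ[ℂ] ℓ²) : Submodule ℂ ℓ²) : Set ℓ²) ⊆
        {w : ℓ² | ‖(inner ℂ w θ : ℂ)‖ ≤ κ * (‖w‖ * ‖θ‖)} := by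
      rintro w ⟨g, rfl⟩; exact hb g
    exact (closure_minimal hsub hcl) hzc
  have hinner : (inner ℂ z θ : ℂ) = inner ℂ z z := by
    have hmem : θ - z ∈ Y := by
      have : θ - z = orthProj Y (ContinuousLinearMap.isClosed_ker (adjoint U)) θ := by
        rw [hzdef]; abel
      rw [this]
      exact (Y.orthogonalProjectionOnto θ).2
    have h0 : (inner ℂ z (θ - z) : ℂ) = 0 := Submodule.inner_left_of_mem_orthogonal hmem hz
    have := inner_add_right (𝕜 := ℂ) z z (θ - z)
    rw [h0, add_zero] at this
    rw [← this]
    congr 1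
    abel
  have hzz : ‖(inner ℂ z z : ℂ)‖ = ‖z‖ ^ 2 := by
    rw [inner_self_eq_norm_sq_to_K]
    norm_num
  rw [hinner, hzz] at key
  rcases eq_or_lt_of_le (norm_nonneg z) with h0 | h0
  · rw [← h0]; positivity
  · have : ‖z‖ * ‖z‖ ≤ (κ * ‖θ‖) * ‖z‖ := by nlinarith
    exact le_of_mul_le_mul_right this h0

lemma anaLower (φ : ℕ → H) (U : H →L[ℂ] ℓ²) (hU : IsAnalysis φ U) {m M : ℝ}
    (hF : IsFrame φ m M) (g : H) : Real.sqrt m * ‖g‖ ≤ ‖U g‖ := by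
  obtain ⟨hm, hM, hfr⟩ := hF
  have h1 : m * ‖g‖ ^ 2 ≤ ‖U g‖ ^ 2 := by
    rw [l2norm_sq]
    refine le_trans (hfr g).1 (le_of_eq ?_)
    exact tsum_congr fun n => by rw [hU g n]
  calc Real.sqrt m * ‖g‖ = Real.sqrt (m * ‖g‖ ^ 2) := by
        rw [Real.sqrt_mul hm.le, Real.sqrt_sq (norm_nonneg g)]
    _ ≤ Real.sqrt (‖U g‖ ^ 2) := Real.sqrt_le_sqrt h1
    _ = ‖U g‖ := Real.sqrt_sq (norm_nonneg _)

lemma invUnique {a b c : H →L[ℂ] H} (h1 : b ∘L a = ContinuousLinearMap.id ℂ H)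
    (h2 : a ∘L c = ContinuousLinearMap.id ℂ H) : c = b := by
  calc c = (b ∘L a) ∘L c := by rw [h1, ContinuousLinearMap.id_comp]
    _ = b ∘L (a ∘L c) := by rw [ContinuousLinearMap.comp_assoc]
    _ = b := by rw [h2, ContinuousLinearMap.comp_id]

lemma projSurj {E F : Type} [NormedAddCommGroup E] [InnerProductSpace ℂ E] [CompleteSpace E]
    [NormedAddCommGroup F] [NormedSpace ℂ F]
    (X Y : Submodule ℂ E) (hX : IsClosed (X : Set E)) (hY : IsClosed (Y : Set E))
    (c : ℝ) (hc0 : 0 ≤ c) (hc : c < 1)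
    (hgap : ∀ y : E, y ∈ Y → ‖y - orthProj X hX y‖ ≤ c * ‖y‖)
    (Ξ₀ : F →L[ℂ] E) (hΞ₀ : ∀ x, Ξ₀ x ∈ Y) :
    ∃ Θ : F →L[ℂ] E, (∀ x, Θ x ∈ X) ∧ orthProj Y hY ∘L Θ = Ξ₀ := by
  letI := hX.completeSpace_coe
  letI := hY.completeSpace_coe
  set R : ↥Y →L[ℂ] ↥Y := orthProjTo Y hY ∘L (orthProj X hX ∘L Y.subtypeL) with hRd
  have hR1 : ‖(1 : ↥Y →L[ℂ] ↥Y) - R‖ < 1 := by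
    refine lt_of_le_of_lt (opNorm_le_bound _ hc0 fun y => ?_) hc
    have h1 : ((1 : ↥Y →L[ℂ] ↥Y) - R) y =
        orthProjTo Y hY ((y : E) - orthProj X hX (y : E)) := by
      rw [ContinuousLinearMap.sub_apply, map_sub]
      congr 1
      rw [ContinuousLinearMap.one_apply]
      exact (Submodule.orthogonalProjectionOnto_mem_subspace_eq_self y).symm
    rw [h1]
    have h2 : ‖orthProjTo Y hY ((y : E) - orthProj X hX (y : E))‖ ≤
        1 * ‖(y : E) - orthProj X hX (y : E)‖ :=
      ContinuousLinearMap.le_of_opNorm_le _ (Submodule.orthogonalProjectionOnto_norm_le Y) _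
    rw [one_mul] at h2
    exact le_trans h2 (hgap (y : E) y.2)
  set u : (↥Y →L[ℂ] ↥Y)ˣ := Units.oneSub ((1 : ↥Y →L[ℂ] ↥Y) - R) hR1 with hud
  have hu : (u : ↥Y →L[ℂ] ↥Y) = R := sub_sub_cancel 1 R
  refine ⟨orthProj X hX ∘L (Y.subtypeL ∘L
      (((u⁻¹ : _ˣ) : ↥Y →L[ℂ] ↥Y) ∘L (orthProjTo Y hY ∘L Ξ₀))), fun x => ?_, ?_⟩
  · exact SetLike.coe_mem _
  · refine ContinuousLinearMap.ext fun x => ?_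
    have hRR : R (((u⁻¹ : _ˣ) : ↥Y →L[ℂ] ↥Y) (orthProjTo Y hY (Ξ₀ x))) =
        orthProjTo Y hY (Ξ₀ x) := by
      have hmi := DFunLike.congr_fun u.mul_inv (orthProjTo Y hY (Ξ₀ x))
      rw [ContinuousLinearMap.mul_apply, ContinuousLinearMap.one_apply, hu] at hmi
      exact hmi
    have h1 : (orthProj Y hY ∘L (orthProj X hX ∘L (Y.subtypeL ∘L
        (((u⁻¹ : _ˣ) : ↥Y →L[ℂ] ↥Y) ∘L (orthProjTo Y hY ∘L Ξ₀))))) x =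
        ↑(R (((u⁻¹ : _ˣ) : ↥Y →L[ℂ] ↥Y) (orthProjTo Y hY (Ξ₀ x)))) := rfl
    rw [h1, hRR]
    exact Submodule.starProjection_eq_self_iff.mpr (hΞ₀ x)

set_option maxHeartbeats 2000000 in
theorem stmt16
    (φ ψ : ℕ → H) (mΦ MΦ MΨ μ : ℝ)
    (UΦ UΨ : H →L[ℂ] ℓ²) (TΦ TΨ : ℓ² →L[ℂ] H)
    (SΦ SΦinv SΨ SΨinv : H →L[ℂ] H)
    (hUΦ : IsAnalysis φ UΦ) (hUΨ : IsAnalysis ψ UΨ)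
    (hTΦ : TΦ = adjoint UΦ) (hTΨ : TΨ = adjoint UΨ)
    (hSΦ : SΦ = TΦ ∘L UΦ) (hSΨ : SΨ = TΨ ∘L UΨ)
    (hSΦ1 : SΦ ∘L SΦinv = ContinuousLinearMap.id ℂ H)
    (hSΦ2 : SΦinv ∘L SΦ = ContinuousLinearMap.id ℂ H)
    (hSΨ1 : SΨ ∘L SΨinv = ContinuousLinearMap.id ℂ H)
    (hSΨ2 : SΨinv ∘L SΨ = ContinuousLinearMap.id ℂ H)
    (hΦ : IsFrame φ mΦ MΦ) (hΨ : IsBessel ψ MΨ)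
    (hμ : μ < Real.sqrt mΦ / 2) (hper : ‖TΦ - TΨ‖ ≤ μ) :
    Set.BijOn
      (fun D : ℓ² →L[ℂ] H =>
        adjoint (TΦ ∘L adjoint D) ∘L (SΨinv ∘L TΨ) +
          adjoint
            (orthProj (LinearMap.ker (TΨ : ℓ² →ₗ[ℂ] H)) (ContinuousLinearMap.isClosed_ker TΨ) ∘L adjoint D))
      {D : ℓ² →L[ℂ] H | ∃ (A : H →L[ℂ] H) (Θ : H →L[ℂ] ℓ²),
        ‖ContinuousLinearMap.id ℂ H - A‖ < 1 ∧ TΦ ∘L Θ = 0 ∧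
          D = adjoint A ∘L (SΦinv ∘L TΦ) + adjoint Θ}
      {D : ℓ² →L[ℂ] H | ∃ (A : H →L[ℂ] H) (Θ : H →L[ℂ] ℓ²),
        ‖ContinuousLinearMap.id ℂ H - A‖ < 1 ∧ TΨ ∘L Θ = 0 ∧
          D = adjoint A ∘L (SΨinv ∘L TΨ) + adjoint Θ} := by
  subst hTΦ hTΨ hSΦ hSΨ
  -- basic numerics
  have hμ0 : 0 ≤ μ := le_trans (norm_nonneg _) hper
  have hsm : 0 < Real.sqrt mΦ := Real.sqrt_pos.mpr hΦ.1
  have hsmμ : 0 < Real.sqrt mΦ - μ := by linarith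
  set κ1 : ℝ := μ / (Real.sqrt mΦ - μ) with hκ1d
  set κ2 : ℝ := μ / Real.sqrt mΦ with hκ2d
  have hκ1 : 0 ≤ κ1 := div_nonneg hμ0 hsmμ.le
  have hκ2 : 0 ≤ κ2 := div_nonneg hμ0 hsm.le
  have hκ1lt : κ1 < 1 := by
    rw [hκ1d, div_lt_one hsmμ]; linarith
  have hκ2lt : κ2 < 1 := by
    rw [hκ2d, div_lt_one hsm]; linarith
  -- norm of difference of analysis operators
  have hUsub : ‖UΦ - UΨ‖ ≤ μ := by
    have h : UΦ - UΨ = adjoint (adjoint UΦ - adjoint UΨ) := by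
      rw [map_sub, adjoint_adjoint, adjoint_adjoint]
    rw [h, LinearIsometryEquiv.norm_map]
    exact hper
  have hUΨlow : ∀ g : H, (Real.sqrt mΦ - μ) * ‖g‖ ≤ ‖UΨ g‖ := by
    intro g
    have h1 : Real.sqrt mΦ * ‖g‖ ≤ ‖UΦ g‖ := anaLower φ UΦ hUΦ hΦ g
    have h2 : ‖UΦ g - UΨ g‖ ≤ μ * ‖g‖ := by
      have := (UΦ - UΨ).le_opNorm g
      simp only [ContinuousLinearMap.sub_apply] at this
      exact le_trans this (by nlinarith [norm_nonneg g])
    have h3 := norm_sub_norm_le (UΦ g) (UΨ g)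
    linarith
  -- gap estimates
  have estA : ∀ θ : ℓ², adjoint UΦ θ = 0 →
      ‖θ - orthProj (LinearMap.ker (adjoint UΨ : ℓ² →ₗ[ℂ] H))
        (ContinuousLinearMap.isClosed_ker (adjoint UΨ)) θ‖ ≤ κ1 * ‖θ‖ := by
    intro θ hθ
    refine gapEst UΨ θ κ1 hκ1 fun g => ?_
    have h1 : (inner ℂ (UΨ g) θ : ℂ) = inner ℂ g ((adjoint UΨ - adjoint UΦ) θ) := by
      rw [← adjoint_inner_right]
      simp [hθ]
    have h2 : ‖(adjoint UΨ - adjoint UΦ) θ‖ ≤ μ * ‖θ‖ := by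
      have := (adjoint UΨ - adjoint UΦ).le_opNorm θ
      have hn : ‖adjoint UΨ - adjoint UΦ‖ ≤ μ := by rw [norm_sub_rev]; exact hper
      nlinarith [norm_nonneg θ]
    have h3 : ‖(inner ℂ (UΨ g) θ : ℂ)‖ ≤ ‖g‖ * (μ * ‖θ‖) := by
      rw [h1]
      refine le_trans (norm_inner_le_norm _ _) ?_
      nlinarith [norm_nonneg g]
    refine le_trans h3 ?_
    have h4 := hUΨlow g
    have h5 : κ1 * (Real.sqrt mΦ - μ) = μ := div_mul_cancel₀ μ hsmμ.ne'
    have h6 : μ * ‖g‖ ≤ κ1 * ‖UΨ g‖ := by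
      have h7 := mul_le_mul_of_nonneg_left h4 hκ1
      calc μ * ‖g‖ = κ1 * ((Real.sqrt mΦ - μ) * ‖g‖) := by rw [← mul_assoc, h5]
        _ ≤ κ1 * ‖UΨ g‖ := h7
    nlinarith [h6, norm_nonneg θ]
  have estB : ∀ θ : ℓ², adjoint UΨ θ = 0 →
      ‖θ - orthProj (LinearMap.ker (adjoint UΦ : ℓ² →ₗ[ℂ] H))
        (ContinuousLinearMap.isClosed_ker (adjoint UΦ)) θ‖ ≤ κ2 * ‖θ‖ := by
    intro θ hθ
    refine gapEst UΦ θ κ2 hκ2 fun g => ?_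
    have h1 : (inner ℂ (UΦ g) θ : ℂ) = inner ℂ g ((adjoint UΦ - adjoint UΨ) θ) := by
      rw [← adjoint_inner_right]
      simp [hθ]
    have h2 : ‖(adjoint UΦ - adjoint UΨ) θ‖ ≤ μ * ‖θ‖ := by
      have := (adjoint UΦ - adjoint UΨ).le_opNorm θ
      nlinarith [norm_nonneg θ]
    have h3 : ‖(inner ℂ (UΦ g) θ : ℂ)‖ ≤ ‖g‖ * (μ * ‖θ‖) := by
      rw [h1]
      refine le_trans (norm_inner_le_norm _ _) ?_
      nlinarith [norm_nonneg g]
    refine le_trans h3 ?_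
    have h4 : Real.sqrt mΦ * ‖g‖ ≤ ‖UΦ g‖ := anaLower φ UΦ hUΦ hΦ g
    have h5 : κ2 * Real.sqrt mΦ = μ := div_mul_cancel₀ μ hsm.ne'
    have h6 : μ * ‖g‖ ≤ κ2 * ‖UΦ g‖ := by
      have h7 := mul_le_mul_of_nonneg_left h4 hκ2
      calc μ * ‖g‖ = κ2 * (Real.sqrt mΦ * ‖g‖) := by rw [← mul_assoc, h5]
        _ ≤ κ2 * ‖UΦ g‖ := h7
    nlinarith [h6, norm_nonneg θ]
  -- self-adjointness of the inverse frame operators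
  have hSΦinvAdj : adjoint SΦinv = SΦinv := by
    refine invUnique hSΦ2 ?_
    have h := congrArg (fun T : H →L[ℂ] H => adjoint T) hSΦ2
    simpa only [adjoint_comp, adjoint_adjoint, adjoint_id] using h
  have hSΨinvAdj : adjoint SΨinv = SΨinv := by
    refine invUnique hSΨ2 ?_
    have h := congrArg (fun T : H →L[ℂ] H => adjoint T) hSΨ2
    simpa only [adjoint_comp, adjoint_adjoint, adjoint_id] using h
  -- key operator identities
  have key1 : ∀ (A : H →L[ℂ] H) (Θ : H →L[ℂ] ℓ²),
      adjoint (adjoint A ∘L (SΦinv ∘L adjoint UΦ) + adjoint Θ)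
        = (UΦ ∘L SΦinv) ∘L A + Θ := by
    intro A Θ
    simp only [map_add, adjoint_comp, adjoint_adjoint, hSΦinvAdj]
  have key2 : ∀ (V : H →L[ℂ] ℓ²) (Sinv : H →L[ℂ] H),
      (adjoint V ∘L V) ∘L Sinv = ContinuousLinearMap.id ℂ H →
      ∀ (A : H →L[ℂ] H) (Θ' : H →L[ℂ] ℓ²), adjoint V ∘L Θ' = 0 →
      adjoint V ∘L ((V ∘L Sinv) ∘L A + Θ') = A := by
    intro V Sinv hVS A Θ' hΘ'
    refine ContinuousLinearMap.ext fun x => ?_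
    have h1 := DFunLike.congr_fun hVS (A x)
    have h2 := DFunLike.congr_fun hΘ' x
    simp only [coe_comp', Function.comp_apply, ContinuousLinearMap.coe_id', id_eq] at h1
    simp only [coe_comp', Function.comp_apply, ContinuousLinearMap.zero_apply] at h2
    simp only [coe_comp', Function.comp_apply, ContinuousLinearMap.add_apply, map_add, h1, h2,
      add_zero]
  have key3 : adjoint UΨ ∘L orthProj (LinearMap.ker (adjoint UΨ : ℓ² →ₗ[ℂ] H))
      (ContinuousLinearMap.isClosed_ker (adjoint UΨ)) = 0 := by
    letI := (ContinuousLinearMap.isClosed_ker (adjoint UΨ)).completeSpace_coe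
    refine ContinuousLinearMap.ext fun x => ?_
    have hm := ((LinearMap.ker (adjoint UΨ : ℓ² →ₗ[ℂ] H)).orthogonalProjectionOnto x).2
    simp only [coe_comp', Function.comp_apply, ContinuousLinearMap.zero_apply, orthProj,
      Submodule.coe_subtypeL', Submodule.coe_subtype]
    exact LinearMap.mem_ker.mp hm
  have hadjf : ∀ D : ℓ² →L[ℂ] H,
      adjoint (adjoint (adjoint UΦ ∘L adjoint D) ∘L (SΨinv ∘L adjoint UΨ) +
        adjoint (orthProj (LinearMap.ker (adjoint UΨ : ℓ² →ₗ[ℂ] H))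
          (ContinuousLinearMap.isClosed_ker (adjoint UΨ)) ∘L adjoint D))
      = (UΨ ∘L SΨinv) ∘L (adjoint UΦ ∘L adjoint D) +
        orthProj (LinearMap.ker (adjoint UΨ : ℓ² →ₗ[ℂ] H))
          (ContinuousLinearMap.isClosed_ker (adjoint UΨ)) ∘L adjoint D := by
    intro D
    simp only [map_add, adjoint_comp, adjoint_adjoint, hSΨinvAdj]
  have hTfd : ∀ D : ℓ² →L[ℂ] H,
      adjoint UΨ ∘L ((UΨ ∘L SΨinv) ∘L (adjoint UΦ ∘L adjoint D) +
        orthProj (LinearMap.ker (adjoint UΨ : ℓ² →ₗ[ℂ] H))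
          (ContinuousLinearMap.isClosed_ker (adjoint UΨ)) ∘L adjoint D)
      = adjoint UΦ ∘L adjoint D := by
    intro D
    refine key2 UΨ SΨinv hSΨ1 _ _ ?_
    rw [← ContinuousLinearMap.comp_assoc, key3, ContinuousLinearMap.zero_comp]
  refine ⟨?_, ?_, ?_⟩
  -- MapsTo
  · rintro D ⟨A, Θ, hA, hΘ, rfl⟩
    have hDt := key1 A Θ
    have hTD : adjoint UΦ ∘L adjoint (adjoint A ∘L (SΦinv ∘L adjoint UΦ) + adjoint Θ) = A := by
      rw [hDt]; exact key2 UΦ SΦinv hSΦ1 A Θ hΘ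
    refine ⟨A, orthProj (LinearMap.ker (adjoint UΨ : ℓ² →ₗ[ℂ] H))
      (ContinuousLinearMap.isClosed_ker (adjoint UΨ)) ∘L
        adjoint (adjoint A ∘L (SΦinv ∘L adjoint UΦ) + adjoint Θ), hA, ?_, ?_⟩
    · rw [← ContinuousLinearMap.comp_assoc, key3, ContinuousLinearMap.zero_comp]
    · dsimp only
      rw [hTD]
  -- InjOn
  · rintro D₁ ⟨A₁, Θ₁, hA₁, hΘ₁, hDe₁⟩ D₂ ⟨A₂, Θ₂, hA₂, hΘ₂, hDe₂⟩ h
    beta_reduce at h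
    have hDt₁ : adjoint D₁ = (UΦ ∘L SΦinv) ∘L A₁ + Θ₁ := by rw [hDe₁]; exact key1 A₁ Θ₁
    have hDt₂ : adjoint D₂ = (UΦ ∘L SΦinv) ∘L A₂ + Θ₂ := by rw [hDe₂]; exact key1 A₂ Θ₂
    have hA₁' : adjoint UΦ ∘L adjoint D₁ = A₁ := by
      rw [hDt₁]; exact key2 UΦ SΦinv hSΦ1 A₁ Θ₁ hΘ₁
    have hA₂' : adjoint UΦ ∘L adjoint D₂ = A₂ := by
      rw [hDt₂]; exact key2 UΦ SΦinv hSΦ1 A₂ Θ₂ hΘ₂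
    have heq : (UΨ ∘L SΨinv) ∘L (adjoint UΦ ∘L adjoint D₁) +
        orthProj (LinearMap.ker (adjoint UΨ : ℓ² →ₗ[ℂ] H))
          (ContinuousLinearMap.isClosed_ker (adjoint UΨ)) ∘L adjoint D₁
        = (UΨ ∘L SΨinv) ∘L (adjoint UΦ ∘L adjoint D₂) +
        orthProj (LinearMap.ker (adjoint UΨ : ℓ² →ₗ[ℂ] H))
          (ContinuousLinearMap.isClosed_ker (adjoint UΨ)) ∘L adjoint D₂ := by
      rw [← hadjf D₁, ← hadjf D₂, h]
    have hAeq : A₁ = A₂ := by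
      calc A₁ = adjoint UΦ ∘L adjoint D₁ := hA₁'.symm
        _ = adjoint UΨ ∘L ((UΨ ∘L SΨinv) ∘L (adjoint UΦ ∘L adjoint D₁) +
            orthProj (LinearMap.ker (adjoint UΨ : ℓ² →ₗ[ℂ] H))
              (ContinuousLinearMap.isClosed_ker (adjoint UΨ)) ∘L adjoint D₁) := (hTfd D₁).symm
        _ = adjoint UΨ ∘L ((UΨ ∘L SΨinv) ∘L (adjoint UΦ ∘L adjoint D₂) +
            orthProj (LinearMap.ker (adjoint UΨ : ℓ² →ₗ[ℂ] H))
              (ContinuousLinearMap.isClosed_ker (adjoint UΨ)) ∘L adjoint D₂) := by rw [heq]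
        _ = adjoint UΦ ∘L adjoint D₂ := hTfd D₂
        _ = A₂ := hA₂'
    have hPeq : orthProj (LinearMap.ker (adjoint UΨ : ℓ² →ₗ[ℂ] H))
        (ContinuousLinearMap.isClosed_ker (adjoint UΨ)) ∘L adjoint D₁
        = orthProj (LinearMap.ker (adjoint UΨ : ℓ² →ₗ[ℂ] H))
          (ContinuousLinearMap.isClosed_ker (adjoint UΨ)) ∘L adjoint D₂ := by
      have h2 := heq
      rw [hA₁', hA₂', hAeq] at h2
      exact add_left_cancel h2
    have hPΘeq : orthProj (LinearMap.ker (adjoint UΨ : ℓ² →ₗ[ℂ] H))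
        (ContinuousLinearMap.isClosed_ker (adjoint UΨ)) ∘L Θ₁
        = orthProj (LinearMap.ker (adjoint UΨ : ℓ² →ₗ[ℂ] H))
          (ContinuousLinearMap.isClosed_ker (adjoint UΨ)) ∘L Θ₂ := by
      have h2 := hPeq
      rw [hDt₁, hDt₂, ContinuousLinearMap.comp_add, ContinuousLinearMap.comp_add, hAeq] at h2
      exact add_left_cancel h2
    have hΘeq : Θ₁ = Θ₂ := by
      refine ContinuousLinearMap.ext fun x => ?_
      have hker : adjoint UΦ (Θ₁ x - Θ₂ x) = 0 := by
        have t1 := DFunLike.congr_fun hΘ₁ x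
        have t2 := DFunLike.congr_fun hΘ₂ x
        simp only [coe_comp', Function.comp_apply, ContinuousLinearMap.zero_apply] at t1 t2
        rw [map_sub, t1, t2, sub_zero]
      have hP0 : orthProj (LinearMap.ker (adjoint UΨ : ℓ² →ₗ[ℂ] H))
          (ContinuousLinearMap.isClosed_ker (adjoint UΨ)) (Θ₁ x - Θ₂ x) = 0 := by
        have t := DFunLike.congr_fun hPΘeq x
        simp only [coe_comp', Function.comp_apply] at t
        rw [map_sub, t, sub_self]
      have hest := estA _ hker
      rw [hP0, sub_zero] at hest
      rcases eq_or_lt_of_le (norm_nonneg (Θ₁ x - Θ₂ x)) with hz | hz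
      · exact sub_eq_zero.mp (norm_eq_zero.mp hz.symm)
      · exfalso
        have hlt : κ1 * ‖Θ₁ x - Θ₂ x‖ < 1 * ‖Θ₁ x - Θ₂ x‖ :=
          mul_lt_mul_of_pos_right hκ1lt hz
        rw [one_mul] at hlt
        exact lt_irrefl _ (lt_of_le_of_lt hest hlt)
    rw [hDe₁, hDe₂, hAeq, hΘeq]
  -- SurjOn
  · rintro E ⟨B, Ξ, hB, hΞ, hEe⟩
    set Ξ₀ : H →L[ℂ] ℓ² := Ξ - orthProj (LinearMap.ker (adjoint UΨ : ℓ² →ₗ[ℂ] H))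
      (ContinuousLinearMap.isClosed_ker (adjoint UΨ)) ∘L ((UΦ ∘L SΦinv) ∘L B) with hΞ₀d
    have hΞ₀mem : ∀ x : H, Ξ₀ x ∈ LinearMap.ker (adjoint UΨ : ℓ² →ₗ[ℂ] H) := by
      intro x
      refine sub_mem ?_ ?_
      · refine LinearMap.mem_ker.mpr ?_
        have := DFunLike.congr_fun hΞ x
        simpa only [coe_comp', Function.comp_apply, ContinuousLinearMap.zero_apply,
          ContinuousLinearMap.coe_coe] using this
      · exact SetLike.coe_mem _
    obtain ⟨Θ, hΘX, hPΘ⟩ := projSurj (LinearMap.ker (adjoint UΦ : ℓ² →ₗ[ℂ] H)) (LinearMap.ker (adjoint UΨ : ℓ² →ₗ[ℂ] H))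
      (ContinuousLinearMap.isClosed_ker (adjoint UΦ))
      (ContinuousLinearMap.isClosed_ker (adjoint UΨ)) κ2 hκ2 hκ2lt
      (fun y hy => estB y (LinearMap.mem_ker.mp hy)) Ξ₀ hΞ₀mem
    have hΘker : adjoint UΦ ∘L Θ = 0 := by
      refine ContinuousLinearMap.ext fun x => ?_
      simpa only [coe_comp', Function.comp_apply, ContinuousLinearMap.zero_apply,
        ContinuousLinearMap.coe_coe] using LinearMap.mem_ker.mp (hΘX x)
    refine ⟨adjoint B ∘L (SΦinv ∘L adjoint UΦ) + adjoint Θ, ⟨B, Θ, hB, hΘker, rfl⟩, ?_⟩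
    have hDt := key1 B Θ
    have hTD : adjoint UΦ ∘L adjoint (adjoint B ∘L (SΦinv ∘L adjoint UΦ) + adjoint Θ) = B := by
      rw [hDt]; exact key2 UΦ SΦinv hSΦ1 B Θ hΘker
    have hPD : orthProj (LinearMap.ker (adjoint UΨ : ℓ² →ₗ[ℂ] H))
        (ContinuousLinearMap.isClosed_ker (adjoint UΨ)) ∘L
        adjoint (adjoint B ∘L (SΦinv ∘L adjoint UΦ) + adjoint Θ) = Ξ := by
      rw [hDt, ContinuousLinearMap.comp_add, hPΘ, hΞ₀d]
      abel
    dsimp only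
    rw [hTD, hPD, hEe]

end
end

section
/- Let Φ be a frame with lower bound m_Φ and Ψ a sequence which is d-quadratically close to Φ with q_Λ < 1 for a dual frame Φ̃(Λ) of Φ with upper frame bound M_{Φ̃(Λ)}. Then Ψ is a frame and the canonical approximately duals (for operators A₁, A₂ with ‖Id − Aᵢ‖ < 1) satisfy: if √(m_Φ M_{Φ̃(Λ)}) ≤ 1 − q_Λ, then ‖T_{Φ₀^{ad}(A₁)} − T_{Ψ₀^{ad}(A₂)}‖ ≤ (2√q ‖A₁‖ + √m_Φ ‖A₁ − A₂‖)/m_Φ. -/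
open ContinuousLinearMap MeasureTheory
open scoped InnerProductSpace ComplexConjugate

noncomputable section

variable {H : Type} [NormedAddCommGroup H] [InnerProductSpace ℂ H] [CompleteSpace H]

lemma aux_lp_summable (x : ℓ²) : Summable fun n => ‖x n‖ ^ 2 := by
  have h := lp.memℓp x
  have := h.summable (p := 2) (by norm_num)
  simpa using this

lemma aux_lp_norm_sq (x : ℓ²) : ‖x‖ ^ 2 = ∑' n, ‖x n‖ ^ 2 := by
  have h := lp.norm_rpow_eq_tsum (p := 2) (by norm_num) x
  simpa [Real.rpow_natCast] using h

lemma aux_inv_norm (m : ℝ) (hm : 0 < m) (U : H →L[ℂ] ℓ²) (S Sinv : H →L[ℂ] H)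
    (hS : S = adjoint U ∘L U) (hinv : S ∘L Sinv = ContinuousLinearMap.id ℂ H)
    (hlow : ∀ f, m * ‖f‖ ^ 2 ≤ ‖U f‖ ^ 2) : ‖Sinv‖ ≤ 1 / m := by
  have h1 : ∀ f : H, m * ‖f‖ ≤ ‖S f‖ := by
    intro f
    have h2 : ‖U f‖ ^ 2 = RCLike.re (inner ℂ (f : H) (S f) : ℂ) := by
      rw [hS]
      have : (inner ℂ f ((adjoint U ∘L U) f) : ℂ) = inner ℂ (U f) (U f) := by
        rw [comp_apply, adjoint_inner_right]
      rw [this, ← norm_sq_eq_re_inner]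
    have h3 : RCLike.re (inner ℂ (f : H) (S f) : ℂ) ≤ ‖f‖ * ‖S f‖ :=
      le_trans (RCLike.re_le_norm _) (norm_inner_le_norm _ _)
    have h4 : m * ‖f‖ ^ 2 ≤ ‖f‖ * ‖S f‖ := le_trans (h2 ▸ hlow f) h3
    rcases eq_or_lt_of_le (norm_nonneg f) with hf | hf
    · simp [← hf, hm.le]
    · nlinarith
  refine opNorm_le_bound _ (by positivity) fun g => ?_
  have := h1 (Sinv g)
  have hg : S (Sinv g) = g := by
    have := congrArg (fun T : H →L[ℂ] H => T g) hinv
    simpa using this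
  rw [hg] at this
  rw [div_mul_eq_mul_div, le_div_iff₀ hm]
  linarith

lemma aux_sq_one_norm (Q : ℓ² →L[ℂ] ℓ²) (hQQ : Q ∘L Q = Q) (hQadj : adjoint Q = Q) :
    ‖Q‖ ≤ 1 := by
  have h := norm_adjoint_comp_self Q
  rw [hQadj, hQQ] at h
  nlinarith [norm_nonneg Q]

lemma aux_sq_le {a b c : ℝ} (ha : 0 ≤ a) (hb : 0 ≤ b) (hc : 0 ≤ c)
    (h : a ^ 2 ≤ b * c ^ 2) : a ≤ Real.sqrt b * c := by
  have h2 := Real.sqrt_le_sqrt h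
  rwa [Real.sqrt_sq ha, Real.sqrt_mul hb, Real.sqrt_sq hc] at h2

set_option maxHeartbeats 8000000 in
theorem stmt18
    (φ ψ : ℕ → H) (mΦ MΦ md Md q qΛ : ℝ)
    (UΦ UΨ : H →L[ℂ] ℓ²) (TΦ TΨ : ℓ² →L[ℂ] H)
    (SΦ SΦinv SΨ SΨinv A1 A2 : H →L[ℂ] H) (Λ : H →L[ℂ] ℓ²)
    (hUΦ : IsAnalysis φ UΦ) (hUΨ : IsAnalysis ψ UΨ)
    (hTΦ : TΦ = adjoint UΦ) (hTΨ : TΨ = adjoint UΨ)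
    (hSΦ : SΦ = TΦ ∘L UΦ) (hSΨ : SΨ = TΨ ∘L UΨ)
    (hSΦ1 : SΦ ∘L SΦinv = ContinuousLinearMap.id ℂ H)
    (hSΦ2 : SΦinv ∘L SΦ = ContinuousLinearMap.id ℂ H)
    (hSΨ1 : SΨ ∘L SΨinv = ContinuousLinearMap.id ℂ H)
    (hSΨ2 : SΨinv ∘L SΨ = ContinuousLinearMap.id ℂ H)
    (hΦ : IsFrame φ mΦ MΦ)
    (hΛ : TΦ ∘L Λ = 0)
    (hdual : IsFrame (fun n => SΦinv (φ n) + adjoint Λ (lp.single 2 n (1 : ℂ))) md Md)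
    (hqs : Summable fun n => ‖φ n - ψ n‖ ^ 2)
    (hq : q = ∑' n, ‖φ n - ψ n‖ ^ 2)
    (hqΛs : Summable fun n =>
      ‖φ n - ψ n‖ * ‖SΦinv (φ n) + adjoint Λ (lp.single 2 n (1 : ℂ))‖)
    (hqΛ : qΛ = ∑' n, ‖φ n - ψ n‖ * ‖SΦinv (φ n) + adjoint Λ (lp.single 2 n (1 : ℂ))‖)
    (hqΛlt : qΛ < 1)
    (hA1 : ‖ContinuousLinearMap.id ℂ H - A1‖ < 1)
    (hA2 : ‖ContinuousLinearMap.id ℂ H - A2‖ < 1)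
    (hcase : Real.sqrt (mΦ * Md) ≤ 1 - qΛ) :
    (∃ mΨ MΨ : ℝ, IsFrame ψ mΨ MΨ) ∧
      ‖adjoint A1 ∘L (SΦinv ∘L TΦ) - adjoint A2 ∘L (SΨinv ∘L TΨ)‖ ≤
        (2 * Real.sqrt q * ‖A1‖ + Real.sqrt mΦ * ‖A1 - A2‖) / mΦ := by
  obtain ⟨hmΦ, hMΦ, hΦf⟩ := hΦ
  obtain ⟨hmd, hMd, hdf⟩ := hdual
  set φd : ℕ → H := fun n => SΦinv (φ n) + adjoint Λ (lp.single 2 n (1 : ℂ)) with hφd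
  have hq0 : 0 ≤ q := hq ▸ tsum_nonneg fun n => by positivity
  have hqΛ0 : 0 ≤ qΛ := hqΛ ▸ tsum_nonneg fun n => by positivity
  -- norm formulas for analysis operators
  have hUΦn : ∀ f : H, ‖UΦ f‖ ^ 2 = ∑' n, ‖(inner ℂ (φ n) f : ℂ)‖ ^ 2 := by
    intro f; rw [aux_lp_norm_sq]
    exact tsum_congr fun n => by rw [hUΦ f n]
  have hUΨn : ∀ f : H, ‖UΨ f‖ ^ 2 = ∑' n, ‖(inner ℂ (ψ n) f : ℂ)‖ ^ 2 := by
    intro f; rw [aux_lp_norm_sq]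
    exact tsum_congr fun n => by rw [hUΨ f n]
  -- self-adjointness
  have hSΦadj : adjoint SΦ = SΦ := by
    rw [hSΦ, adjoint_comp, hTΦ, adjoint_adjoint]
  have hSΨadj : adjoint SΨ = SΨ := by
    rw [hSΨ, adjoint_comp, hTΨ, adjoint_adjoint]
  have hSΦinvadj : adjoint SΦinv = SΦinv := by
    have h1 : adjoint SΦinv ∘L SΦ = ContinuousLinearMap.id ℂ H := by
      rw [← hSΦadj, ← adjoint_comp, hSΦ1, adjoint_id]
    calc adjoint SΦinv = adjoint SΦinv ∘L (SΦ ∘L SΦinv) := by rw [hSΦ1, comp_id]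
      _ = (adjoint SΦinv ∘L SΦ) ∘L SΦinv := by rw [comp_assoc]
      _ = SΦinv := by rw [h1, id_comp]
  have hSΨinvadj : adjoint SΨinv = SΨinv := by
    have h1 : adjoint SΨinv ∘L SΨ = ContinuousLinearMap.id ℂ H := by
      rw [← hSΨadj, ← adjoint_comp, hSΨ1, adjoint_id]
    calc adjoint SΨinv = adjoint SΨinv ∘L (SΨ ∘L SΨinv) := by rw [hSΨ1, comp_id]
      _ = (adjoint SΨinv ∘L SΨ) ∘L SΨinv := by rw [comp_assoc]
      _ = SΨinv := by rw [h1, id_comp]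
  -- quadratic closeness bound on analysis/synthesis operators
  have hUdiff : ∀ f : H, ‖(UΦ - UΨ) f‖ ≤ Real.sqrt q * ‖f‖ := by
    intro f
    have h1 : ‖(UΦ - UΨ) f‖ ^ 2 ≤ q * ‖f‖ ^ 2 := by
      rw [aux_lp_norm_sq]
      have hpt : ∀ n : ℕ, ‖((UΦ - UΨ) f) n‖ ^ 2 ≤ ‖φ n - ψ n‖ ^ 2 * ‖f‖ ^ 2 := by
        intro n
        have : ((UΦ - UΨ) f) n = (inner ℂ (φ n - ψ n) f : ℂ) := by
          rw [sub_apply, lp.coeFn_sub, Pi.sub_apply, hUΦ f n, hUΨ f n, inner_sub_left]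
        rw [this, ← mul_pow]
        exact pow_le_pow_left₀ (norm_nonneg _) (norm_inner_le_norm _ _) 2
      calc ∑' n, ‖((UΦ - UΨ) f) n‖ ^ 2 ≤ ∑' n, ‖φ n - ψ n‖ ^ 2 * ‖f‖ ^ 2 := by
            refine Summable.tsum_le_tsum hpt ?_ (hqs.mul_right _)
            exact (hqs.mul_right _).of_nonneg_of_le (fun n => by positivity) hpt
        _ = q * ‖f‖ ^ 2 := by rw [tsum_mul_right, hq]
    exact aux_sq_le (norm_nonneg _) hq0 (norm_nonneg f) h1
  have hUdn : ‖UΦ - UΨ‖ ≤ Real.sqrt q :=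
    opNorm_le_bound _ (Real.sqrt_nonneg q) hUdiff
  have hTsub : TΨ - TΦ = adjoint (UΨ - UΦ) := by rw [hTΦ, hTΨ, map_sub]
  have hTdn : ‖TΨ - TΦ‖ ≤ Real.sqrt q := by
    rw [hTsub, ContinuousLinearMap.adjoint.norm_map, norm_sub_rev]
    exact hUdn
  -- the analysis operator of the dual frame
  set Ut : H →L[ℂ] ℓ² := UΦ ∘L SΦinv + Λ with hUt
  have hUtapply : ∀ (f : H) (n : ℕ), Ut f n = (inner ℂ (φd n) f : ℂ) := by
    intro f n
    have h1 : Ut f n = UΦ (SΦinv f) n + Λ f n := by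
      rw [hUt, add_apply, comp_apply, lp.coeFn_add, Pi.add_apply]
    have h2 : UΦ (SΦinv f) n = (inner ℂ (SΦinv (φ n)) f : ℂ) := by
      rw [hUΦ]
      conv_rhs => rw [← hSΦinvadj]
      rw [adjoint_inner_left]
    have h3 : Λ f n = (inner ℂ (adjoint Λ (lp.single 2 n (1 : ℂ))) f : ℂ) := by
      rw [adjoint_inner_left, lp.inner_single_left]
      simp
    rw [h1, h2, h3, hφd, inner_add_left]
  have hUtn : ∀ f : H, ‖Ut f‖ ≤ Real.sqrt Md * ‖f‖ := by
    intro f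
    have h1 : ‖Ut f‖ ^ 2 ≤ Md * ‖f‖ ^ 2 := by
      rw [aux_lp_norm_sq]
      calc ∑' n, ‖Ut f n‖ ^ 2 = ∑' n, ‖(inner ℂ (φd n) f : ℂ)‖ ^ 2 :=
            tsum_congr fun n => by rw [hUtapply f n]
        _ ≤ Md * ‖f‖ ^ 2 := (hdf f).2
    exact aux_sq_le (norm_nonneg _) hMd.le (norm_nonneg f) h1
  -- duality : TΦ ∘ Ut = id
  have hTΦUt : TΦ ∘L Ut = ContinuousLinearMap.id ℂ H := by
    rw [hUt, comp_add, ← comp_assoc, ← hSΦ, hSΦ1, hΛ, add_zero]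
  -- key estimate
  have hkey : ∀ f : H, ‖(TΨ - TΦ) (Ut f)‖ ≤ qΛ * ‖f‖ := by
    intro f
    have habs : ∀ g : H, ‖(inner ℂ ((TΨ - TΦ) (Ut f)) g : ℂ)‖ ≤ qΛ * (‖f‖ * ‖g‖) := by
      intro g
      have h1 : (inner ℂ ((TΨ - TΦ) (Ut f)) g : ℂ)
          = ∑' n, (inner ℂ (Ut f n) (((UΨ - UΦ) g) n) : ℂ) := by
        rw [hTsub, adjoint_inner_left, lp.inner_eq_tsum]
      have hterm : ∀ n : ℕ, ‖(inner ℂ (Ut f n) (((UΨ - UΦ) g) n) : ℂ)‖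
          ≤ (‖φ n - ψ n‖ * ‖φd n‖) * (‖f‖ * ‖g‖) := by
        intro n
        have e1 : ‖Ut f n‖ ≤ ‖φd n‖ * ‖f‖ := by
          rw [hUtapply f n]; exact norm_inner_le_norm _ _
        have e2 : ‖((UΨ - UΦ) g) n‖ ≤ ‖φ n - ψ n‖ * ‖g‖ := by
          have : ((UΨ - UΦ) g) n = (inner ℂ (ψ n - φ n) g : ℂ) := by
            rw [sub_apply, lp.coeFn_sub, Pi.sub_apply, hUΦ g n, hUΨ g n, inner_sub_left]
          rw [this]
          calc ‖(inner ℂ (ψ n - φ n) g : ℂ)‖ ≤ ‖ψ n - φ n‖ * ‖g‖ := norm_inner_le_norm _ _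
            _ = ‖φ n - ψ n‖ * ‖g‖ := by rw [norm_sub_rev]
        calc ‖(inner ℂ (Ut f n) (((UΨ - UΦ) g) n) : ℂ)‖
            ≤ ‖Ut f n‖ * ‖((UΨ - UΦ) g) n‖ := norm_inner_le_norm _ _
          _ ≤ (‖φd n‖ * ‖f‖) * (‖φ n - ψ n‖ * ‖g‖) := by
              apply mul_le_mul e1 e2 (norm_nonneg _) (by positivity)
          _ = (‖φ n - ψ n‖ * ‖φd n‖) * (‖f‖ * ‖g‖) := by ring
      have hsumb : Summable fun n : ℕ => (‖φ n - ψ n‖ * ‖φd n‖) * (‖f‖ * ‖g‖) :=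
        hqΛs.mul_right _
      have hsumn : Summable fun n : ℕ => ‖(inner ℂ (Ut f n) (((UΨ - UΦ) g) n) : ℂ)‖ :=
        hsumb.of_nonneg_of_le (fun n => norm_nonneg _) hterm
      calc ‖(inner ℂ ((TΨ - TΦ) (Ut f)) g : ℂ)‖
          ≤ ∑' n, ‖(inner ℂ (Ut f n) (((UΨ - UΦ) g) n) : ℂ)‖ := by
            rw [h1]; exact norm_tsum_le_tsum_norm hsumn
        _ ≤ ∑' n, (‖φ n - ψ n‖ * ‖φd n‖) * (‖f‖ * ‖g‖) :=
            Summable.tsum_le_tsum hterm hsumn hsumb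
        _ = qΛ * (‖f‖ * ‖g‖) := by rw [tsum_mul_right, hqΛ]
    set x : H := (TΨ - TΦ) (Ut f) with hx
    have h0 : ‖x‖ ^ 2 ≤ qΛ * ‖f‖ * ‖x‖ := by
      have := habs x
      have hre : (‖x‖ : ℝ) ^ 2 = RCLike.re (inner ℂ (x : H) (x : H) : ℂ) := norm_sq_eq_re_inner x
      calc ‖x‖ ^ 2 = RCLike.re (inner ℂ (x : H) (x : H) : ℂ) := hre
        _ ≤ ‖(inner ℂ (x : H) (x : H) : ℂ)‖ := RCLike.re_le_norm _
        _ ≤ qΛ * (‖f‖ * ‖x‖) := habs x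
        _ = qΛ * ‖f‖ * ‖x‖ := by ring
    rcases (norm_nonneg x).eq_or_lt with hx0 | hx0
    · rw [← hx0]; positivity
    · have := le_of_mul_le_mul_right (by nlinarith : ‖x‖ * ‖x‖ ≤ (qΛ * ‖f‖) * ‖x‖) hx0
      exact this
  -- invertibility of V = TΨ ∘ Ut
  set V : H →L[ℂ] H := TΨ ∘L Ut with hV
  have hVdiff : ∀ f : H, ‖f - V f‖ ≤ qΛ * ‖f‖ := by
    intro f
    have h1 : f - V f = -((TΨ - TΦ) (Ut f)) := by
      have h2 : TΦ (Ut f) = f := by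
        have := congrArg (fun T : H →L[ℂ] H => T f) hTΦUt
        simpa using this
      rw [hV]
      simp only [comp_apply, sub_apply]
      rw [h2]
      abel
    rw [h1, norm_neg]
    exact hkey f
  have h1V : ‖(1 : H →L[ℂ] H) - V‖ ≤ qΛ := by
    refine opNorm_le_bound _ hqΛ0 fun f => ?_
    have : ((1 : H →L[ℂ] H) - V) f = f - V f := by simp
    rw [this]; exact hVdiff f
  set u : (H →L[ℂ] H)ˣ := Units.oneSub ((1 : H →L[ℂ] H) - V) (lt_of_le_of_lt h1V hqΛlt)
    with hu
  have huval : (u : H →L[ℂ] H) = V := by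
    rw [hu, Units.val_oneSub, sub_sub_cancel]
  -- lower frame bound for Ψ
  set mΨ : ℝ := (1 - qΛ) ^ 2 / Md with hmΨ
  have h1qΛ : 0 < 1 - qΛ := by linarith
  have hmΨpos : 0 < mΨ := by rw [hmΨ]; positivity
  have hΨlow : ∀ f : H, mΨ * ‖f‖ ^ 2 ≤ ‖UΨ f‖ ^ 2 := by
    intro f
    set g : H := (↑u⁻¹ : H →L[ℂ] H) f with hg
    have hVg : V g = f := by
      have h2 : (u : H →L[ℂ] H) * (↑u⁻¹ : H →L[ℂ] H) = 1 := by
        rw [← Units.val_mul, mul_inv_cancel, Units.val_one]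
      calc V g = ((u : H →L[ℂ] H) * (↑u⁻¹ : H →L[ℂ] H)) f := by rw [huval]; rfl
        _ = f := by rw [h2]; rfl
    have hgnorm : (1 - qΛ) * ‖g‖ ≤ ‖f‖ := by
      have h3 : ‖g‖ ≤ ‖V g‖ + ‖g - V g‖ := by
        calc ‖g‖ = ‖V g + (g - V g)‖ := by rw [add_sub_cancel]
          _ ≤ ‖V g‖ + ‖g - V g‖ := norm_add_le _ _
      have h3' : ‖V g‖ = ‖f‖ := by rw [hVg]
      have h3'' := hVdiff g
      linarith
    have hinner : (‖f‖ : ℝ) ^ 2 ≤ ‖UΨ f‖ * (Real.sqrt Md * ‖g‖) := by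
      have h4 : (‖f‖ : ℝ) ^ 2 = RCLike.re (inner ℂ (f : H) (f : H) : ℂ) := norm_sq_eq_re_inner f
      have h5 : (inner ℂ (f : H) (f : H) : ℂ) = inner ℂ (UΨ f) (Ut g) := by
        calc (inner ℂ (f : H) (f : H) : ℂ) = inner ℂ (f : H) (V g) := by rw [hVg]
          _ = inner ℂ (f : H) (TΨ (Ut g)) := by rw [hV]; rfl
          _ = inner ℂ (UΨ f) (Ut g) := by rw [hTΨ, adjoint_inner_right]
      calc (‖f‖ : ℝ) ^ 2 = RCLike.re (inner ℂ (f : H) (f : H) : ℂ) := h4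
        _ ≤ ‖(inner ℂ (f : H) (f : H) : ℂ)‖ := RCLike.re_le_norm _
        _ = ‖(inner ℂ (UΨ f) (Ut g) : ℂ)‖ := by rw [h5]
        _ ≤ ‖UΨ f‖ * ‖Ut g‖ := norm_inner_le_norm _ _
        _ ≤ ‖UΨ f‖ * (Real.sqrt Md * ‖g‖) :=
            mul_le_mul_of_nonneg_left (hUtn g) (norm_nonneg _)
    -- conclude
    have hfUΨ : (1 - qΛ) * ‖f‖ ≤ Real.sqrt Md * ‖UΨ f‖ := by
      rcases (norm_nonneg f).eq_or_lt with hf0 | hf0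
      · have hz : (1 - qΛ) * ‖f‖ = 0 := by rw [← hf0]; ring
        rw [hz]; positivity
      · have h6 : (1 - qΛ) * (‖f‖ * ‖f‖) ≤ Real.sqrt Md * ‖UΨ f‖ * ‖f‖ := by
          have h7 : (1 - qΛ) * ‖g‖ * ‖UΨ f‖ * Real.sqrt Md ≤ ‖f‖ * ‖UΨ f‖ * Real.sqrt Md := by
            have : (0:ℝ) ≤ ‖UΨ f‖ * Real.sqrt Md := by positivity
            nlinarith [norm_nonneg (UΨ f), Real.sqrt_nonneg Md]
          nlinarith [hinner, hgnorm, norm_nonneg (UΨ f), Real.sqrt_nonneg Md,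
            norm_nonneg g]
        have := le_of_mul_le_mul_right
          (by nlinarith : ((1 - qΛ) * ‖f‖) * ‖f‖ ≤ (Real.sqrt Md * ‖UΨ f‖) * ‖f‖) hf0
        exact this
    have h8 : ((1 - qΛ) * ‖f‖) ^ 2 ≤ Md * ‖UΨ f‖ ^ 2 := by
      have := mul_self_le_mul_self (by positivity) hfUΨ
      calc ((1 - qΛ) * ‖f‖) ^ 2 = ((1 - qΛ) * ‖f‖) * ((1 - qΛ) * ‖f‖) := by ring
        _ ≤ (Real.sqrt Md * ‖UΨ f‖) * (Real.sqrt Md * ‖UΨ f‖) := this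
        _ = (Real.sqrt Md * Real.sqrt Md) * (‖UΨ f‖ * ‖UΨ f‖) := by ring
        _ = Md * ‖UΨ f‖ ^ 2 := by rw [Real.mul_self_sqrt hMd.le]; ring
    rw [hmΨ, div_mul_eq_mul_div, div_le_iff₀ hMd]
    have h9 : (1 - qΛ) ^ 2 * ‖f‖ ^ 2 = ((1 - qΛ) * ‖f‖) ^ 2 := by ring
    rw [h9]
    linarith [h8]
  -- frame property of Ψ
  have hframe : ∃ mΨ' MΨ' : ℝ, IsFrame ψ mΨ' MΨ' := by
    refine ⟨mΨ, ‖UΨ‖ ^ 2 + 1, hmΨpos, by positivity, fun f => ⟨?_, ?_⟩⟩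
    · rw [← hUΨn]; exact hΨlow f
    · rw [← hUΨn]
      calc ‖UΨ f‖ ^ 2 ≤ (‖UΨ‖ * ‖f‖) ^ 2 :=
            pow_le_pow_left₀ (norm_nonneg _) (le_opNorm UΨ f) 2
        _ = ‖UΨ‖ ^ 2 * ‖f‖ ^ 2 := by ring
        _ ≤ (‖UΨ‖ ^ 2 + 1) * ‖f‖ ^ 2 := by nlinarith [sq_nonneg ‖f‖]
  refine ⟨hframe, ?_⟩
  -- norms of the inverse frame operators
  have hΦlow : ∀ f : H, mΦ * ‖f‖ ^ 2 ≤ ‖UΦ f‖ ^ 2 := fun f => by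
    rw [hUΦn]; exact (hΦf f).1
  have hSΦinvn : ‖SΦinv‖ ≤ 1 / mΦ :=
    aux_inv_norm mΦ hmΦ UΦ SΦ SΦinv (by rw [hSΦ, hTΦ]) hSΦ1 hΦlow
  have hmΨΦ : mΦ ≤ mΨ := by
    have h2 := Real.sq_sqrt (by positivity : (0:ℝ) ≤ mΦ * Md)
    have h1 : mΦ * Md ≤ (1 - qΛ) ^ 2 := by
      nlinarith [Real.sqrt_nonneg (mΦ * Md), hcase]
    rw [hmΨ, le_div_iff₀ hMd]
    linarith
  have hSΨinvn : ‖SΨinv‖ ≤ 1 / mΦ := by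
    have h1 := aux_inv_norm mΨ hmΨpos UΨ SΨ SΨinv (by rw [hSΨ, hTΨ]) hSΨ1 hΨlow
    calc ‖SΨinv‖ ≤ 1 / mΨ := h1
      _ ≤ 1 / mΦ := one_div_le_one_div_of_le hmΦ hmΨΦ
  -- pointwise identities
  have hTUΦ : ∀ y : H, TΦ (UΦ y) = SΦ y := fun y => by rw [hSΦ]; rfl
  have hTUΨ : ∀ y : H, TΨ (UΨ y) = SΨ y := fun y => by rw [hSΨ]; rfl
  have hSSΦ : ∀ y : H, SΦinv (SΦ y) = y := fun y => by
    have := congrArg (fun T : H →L[ℂ] H => T y) hSΦ2; simpa using this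
  have hSSΨ : ∀ y : H, SΨ (SΨinv y) = y := fun y => by
    have := congrArg (fun T : H →L[ℂ] H => T y) hSΨ1; simpa using this
  have hSSΨ' : ∀ y : H, SΨinv (SΨ y) = y := fun y => by
    have := congrArg (fun T : H →L[ℂ] H => T y) hSΨ2; simpa using this
  -- norm bounds for SΦinv ∘ TΦ and SΨinv ∘ TΨ
  have hBn : ∀ (U' : H →L[ℂ] ℓ²) (T' : ℓ² →L[ℂ] H) (S' Sinv' : H →L[ℂ] H),
      T' = adjoint U' → (∀ y : H, T' (U' y) = S' y) → (∀ y : H, Sinv' (S' y) = y) →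
      adjoint Sinv' = Sinv' → ‖Sinv'‖ ≤ 1 / mΦ → ‖Sinv' ∘L T'‖ ≤ Real.sqrt (1 / mΦ) := by
    intro U' T' S' Sinv' hT' hTU' hSS' hadj' hn'
    have e : adjoint (U' ∘L Sinv') = Sinv' ∘L T' := by
      rw [adjoint_comp, hadj', ← hT']
    have e2 : (Sinv' ∘L T') ∘L (U' ∘L Sinv') = Sinv' := by
      ext x
      simp only [comp_apply]
      rw [hTU', hSS']
    have h3 := norm_adjoint_comp_self (U' ∘L Sinv')
    rw [e, e2] at h3
    have h4 : ‖Sinv' ∘L T'‖ = ‖U' ∘L Sinv'‖ := by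
      rw [← e, ContinuousLinearMap.adjoint.norm_map]
    rw [h4]
    have h5 : ‖U' ∘L Sinv'‖ ^ 2 ≤ (1 / mΦ) * (1 : ℝ) ^ 2 := by
      rw [sq, ← h3]
      simpa using hn'
    simpa using aux_sq_le (norm_nonneg _) (by positivity) zero_le_one h5
  have hBΦ : ‖SΦinv ∘L TΦ‖ ≤ Real.sqrt (1 / mΦ) :=
    hBn UΦ TΦ SΦ SΦinv hTΦ hTUΦ hSSΦ hSΦinvadj hSΦinvn
  have hBΨ : ‖SΨinv ∘L TΨ‖ ≤ Real.sqrt (1 / mΦ) :=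
    hBn UΨ TΨ SΨ SΨinv hTΨ hTUΨ hSSΨ' hSΨinvadj hSΨinvn
  -- the projection
  set P : ℓ² →L[ℂ] ℓ² := UΨ ∘L (SΨinv ∘L TΨ) with hP
  have hP2 : P ∘L P = P := by
    ext x
    simp only [hP, comp_apply]
    rw [hTUΨ, hSSΨ']
  have hPadj : adjoint P = P := by
    rw [hP, adjoint_comp, adjoint_comp, hSΨinvadj, hTΨ, adjoint_adjoint, ← hTΨ,
      ← comp_assoc]
  have hQn : ‖ContinuousLinearMap.id ℂ ℓ² - P‖ ≤ 1 := by
    apply aux_sq_one_norm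
    · simp only [comp_sub, sub_comp, id_comp, comp_id, hP2]
      abel
    · rw [map_sub, adjoint_id, hPadj]
  -- decomposition identity
  have hD : SΦinv ∘L TΦ - SΨinv ∘L TΨ =
      (SΦinv ∘L (TΦ - TΨ)) ∘L (ContinuousLinearMap.id ℂ ℓ² - P)
        + ((SΦinv ∘L TΦ) ∘L (UΨ - UΦ)) ∘L (SΨinv ∘L TΨ) := by
    ext x
    simp only [hP, comp_apply, sub_apply, add_apply, ContinuousLinearMap.id_apply,
      map_sub]
    rw [hTUΨ, hTUΦ, hSSΦ, hSSΨ]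
    abel
  -- final estimates
  have hDn : ‖SΦinv ∘L TΦ - SΨinv ∘L TΨ‖ ≤ 2 * Real.sqrt q / mΦ := by
    rw [hD]
    have t1 : ‖(SΦinv ∘L (TΦ - TΨ)) ∘L (ContinuousLinearMap.id ℂ ℓ² - P)‖
        ≤ (1 / mΦ) * Real.sqrt q * 1 := by
      calc ‖(SΦinv ∘L (TΦ - TΨ)) ∘L (ContinuousLinearMap.id ℂ ℓ² - P)‖
          ≤ ‖SΦinv ∘L (TΦ - TΨ)‖ * ‖ContinuousLinearMap.id ℂ ℓ² - P‖ :=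
            opNorm_comp_le _ _
        _ ≤ (‖SΦinv‖ * ‖TΦ - TΨ‖) * 1 := by
            apply mul_le_mul (opNorm_comp_le _ _) hQn (norm_nonneg _) (by positivity)
        _ ≤ (1 / mΦ) * Real.sqrt q * 1 := by
            have h6 : ‖TΦ - TΨ‖ ≤ Real.sqrt q := by rw [norm_sub_rev]; exact hTdn
            have := mul_le_mul hSΦinvn h6 (norm_nonneg _) (by positivity)
            linarith
    have t2 : ‖((SΦinv ∘L TΦ) ∘L (UΨ - UΦ)) ∘L (SΨinv ∘L TΨ)‖
        ≤ Real.sqrt (1 / mΦ) * Real.sqrt q * Real.sqrt (1 / mΦ) := by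
      calc ‖((SΦinv ∘L TΦ) ∘L (UΨ - UΦ)) ∘L (SΨinv ∘L TΨ)‖
          ≤ ‖(SΦinv ∘L TΦ) ∘L (UΨ - UΦ)‖ * ‖SΨinv ∘L TΨ‖ := opNorm_comp_le _ _
        _ ≤ (‖SΦinv ∘L TΦ‖ * ‖UΨ - UΦ‖) * Real.sqrt (1 / mΦ) := by
            apply mul_le_mul (opNorm_comp_le _ _) hBΨ (norm_nonneg _) (by positivity)
        _ ≤ Real.sqrt (1 / mΦ) * Real.sqrt q * Real.sqrt (1 / mΦ) := by
            have h6 : ‖UΨ - UΦ‖ ≤ Real.sqrt q := by rw [norm_sub_rev]; exact hUdn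
            have := mul_le_mul hBΦ h6 (norm_nonneg _) (Real.sqrt_nonneg _)
            have h7 : (0:ℝ) ≤ Real.sqrt (1 / mΦ) := Real.sqrt_nonneg _
            nlinarith
    have hss : Real.sqrt (1 / mΦ) * Real.sqrt (1 / mΦ) = 1 / mΦ :=
      Real.mul_self_sqrt (by positivity)
    calc ‖(SΦinv ∘L (TΦ - TΨ)) ∘L (ContinuousLinearMap.id ℂ ℓ² - P)
          + ((SΦinv ∘L TΦ) ∘L (UΨ - UΦ)) ∘L (SΨinv ∘L TΨ)‖
        ≤ ‖(SΦinv ∘L (TΦ - TΨ)) ∘L (ContinuousLinearMap.id ℂ ℓ² - P)‖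
          + ‖((SΦinv ∘L TΦ) ∘L (UΨ - UΦ)) ∘L (SΨinv ∘L TΨ)‖ := norm_add_le _ _
      _ ≤ (1 / mΦ) * Real.sqrt q * 1
          + Real.sqrt (1 / mΦ) * Real.sqrt q * Real.sqrt (1 / mΦ) := add_le_add t1 t2
      _ = 2 * Real.sqrt q / mΦ := by
          rw [mul_one]
          have : Real.sqrt (1 / mΦ) * Real.sqrt q * Real.sqrt (1 / mΦ)
              = (Real.sqrt (1 / mΦ) * Real.sqrt (1 / mΦ)) * Real.sqrt q := by ring
          rw [this, hss]
          field_simp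
          ring
  have hsplit : adjoint A1 ∘L (SΦinv ∘L TΦ) - adjoint A2 ∘L (SΨinv ∘L TΨ)
      = adjoint A1 ∘L (SΦinv ∘L TΦ - SΨinv ∘L TΨ)
        + (adjoint A1 - adjoint A2) ∘L (SΨinv ∘L TΨ) := by
    simp only [comp_sub, sub_comp]
    abel
  have hA1n : ‖adjoint A1‖ = ‖A1‖ := ContinuousLinearMap.adjoint.norm_map A1
  have hA12n : ‖adjoint A1 - adjoint A2‖ = ‖A1 - A2‖ := by
    rw [← map_sub, ContinuousLinearMap.adjoint.norm_map]
  have hsinv : Real.sqrt (1 / mΦ) = Real.sqrt mΦ / mΦ := by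
    have hms : Real.sqrt mΦ * Real.sqrt mΦ = mΦ := Real.mul_self_sqrt hmΦ.le
    have hmspos : 0 < Real.sqrt mΦ := Real.sqrt_pos.mpr hmΦ
    rw [one_div, Real.sqrt_inv, eq_div_iff (ne_of_gt hmΦ), inv_mul_eq_div,
      div_eq_iff (ne_of_gt hmspos)]
    linarith
  calc ‖adjoint A1 ∘L (SΦinv ∘L TΦ) - adjoint A2 ∘L (SΨinv ∘L TΨ)‖
      ≤ ‖adjoint A1 ∘L (SΦinv ∘L TΦ - SΨinv ∘L TΨ)‖
        + ‖(adjoint A1 - adjoint A2) ∘L (SΨinv ∘L TΨ)‖ := by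
        rw [hsplit]; exact norm_add_le _ _
    _ ≤ ‖A1‖ * (2 * Real.sqrt q / mΦ) + ‖A1 - A2‖ * (Real.sqrt mΦ / mΦ) := by
        apply add_le_add
        · calc ‖adjoint A1 ∘L (SΦinv ∘L TΦ - SΨinv ∘L TΨ)‖
              ≤ ‖adjoint A1‖ * ‖SΦinv ∘L TΦ - SΨinv ∘L TΨ‖ := opNorm_comp_le _ _
            _ ≤ ‖A1‖ * (2 * Real.sqrt q / mΦ) := by
                rw [hA1n]
                exact mul_le_mul_of_nonneg_left hDn (norm_nonneg _)
        · calc ‖(adjoint A1 - adjoint A2) ∘L (SΨinv ∘L TΨ)‖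
              ≤ ‖adjoint A1 - adjoint A2‖ * ‖SΨinv ∘L TΨ‖ := opNorm_comp_le _ _
            _ ≤ ‖A1 - A2‖ * (Real.sqrt mΦ / mΦ) := by
                rw [hA12n, ← hsinv]
                exact mul_le_mul_of_nonneg_left hBΨ (norm_nonneg _)
    _ = (2 * Real.sqrt q * ‖A1‖ + Real.sqrt mΦ * ‖A1 - A2‖) / mΦ := by
        field_simp

end
end
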